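/- In a weighted congestion game with polynomial latency functions of maximum degree d with non-negative coefficients, for every player u and every state S, the cost of u in the weighted congestion game satisfies c_u(S) ≤ ĉ_u(S) ≤ d! · c_u(S), where ĉ_u(S) is the cost of u in the corresponding Ψ-game. -/

import Mathlib

open Finset

variable {n : ℕ} {E : Type*} [Fintype E] [DecidableEq E]

/-- `PsiW w k P = k! ·` (sum of all monomials of total degree `k` in the
weights of the players in `P`). -/
noncomputable def PsiW (w : Fin n → ℝ) (k : ℕ) (P : Finset (Fin n)) : ℝ :=
  (Nat.factorial k : ℝ) * ∑ m ∈ P.sym k, ((m : Multiset (Fin n)).map w).prod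

/-- A weighted congestion game with `n` players, resources `E`, and polynomial
latency functions of maximum degree `d` with non-negative coefficients
`a e k` (for `k ≤ d`). The same data also describes the corresponding Ψ-game. -/
structure WCGame (n : ℕ) (E : Type*) [Fintype E] (d : ℕ) where
  /-- weights of the players -/
  w : Fin n → ℝ
  w_pos : ∀ u, 0 < w u
  /-- strategy sets: nonempty collections of nonempty sets of resources -/
  strat : Fin n → Finset (Finset E)
  strat_ne : ∀ u, (strat u).Nonempty
  strat_mem_ne : ∀ u, ∀ s ∈ strat u, s.Nonempty
  /-- coefficients of the latency functions -/
  a : E → ℕ → ℝ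
  a_nonneg : ∀ e k, 0 ≤ a e k

namespace WCGame

variable {d : ℕ} (G : WCGame n E d)

/-- A state assigns a strategy to every player. -/
def IsState (S : Fin n → Finset E) : Prop := ∀ u, S u ∈ G.strat u

/-- The set of players using resource `e` in state `S`. -/
def users (S : Fin n → Finset E) (e : E) : Finset (Fin n) :=
  univ.filter fun u => e ∈ S u

/-- The cost of player `u` in the weighted congestion game. -/
noncomputable def cost (S : Fin n → Finset E) (u : Fin n) : ℝ :=
  G.w u * ∑ e ∈ S u, ∑ k ∈ Finset.range (d + 1),
    G.a e k * ((users S e).sum G.w) ^ k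

/-- The cost of player `u` in the corresponding Ψ-game. -/
noncomputable def pcost (S : Fin n → Finset E) (u : Fin n) : ℝ :=
  G.w u * ∑ e ∈ S u, ∑ k ∈ Finset.range (d + 1),
    G.a e k * PsiW G.w k (users S e)

/-- The potential of the subgame induced by the players in `C`. -/
noncomputable def potOn (C : Finset (Fin n)) (S : Fin n → Finset E) : ℝ :=
  ∑ e : E, ∑ k ∈ Finset.range (d + 1),
    G.a e k / (k + 1) * PsiW G.w (k + 1) (users S e ∩ C)

/-- The potential function of the Ψ-game. -/
noncomputable def pot (S : Fin n → Finset E) : ℝ := G.potOn univ S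

end WCGame

lemma mult_le_factorial {α : Type*} [DecidableEq α] (m : Multiset α) :
    m.countPerms ≤ (Multiset.card m).factorial := by
  have spec := Nat.multinomial_spec m.toFinsupp.support m.toFinsupp
  have hsum : (∑ i ∈ m.toFinsupp.support, m.toFinsupp i) = Multiset.card m := by
    classical
    conv_rhs => rw [← m.toFinsupp_toMultiset]
    rw [Finsupp.card_toMultiset]
    rfl
  have hdvd : m.countPerms ∣ (Multiset.card m).factorial := by
    rw [← hsum, ← spec]
    exact Dvd.intro_left _ rfl
  exact Nat.le_of_dvd (Nat.factorial_pos _) hdvd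

lemma one_le_mult {α : Type*} [DecidableEq α] (m : Multiset α) :
    1 ≤ m.countPerms := Nat.multinomial_pos _ _

lemma psi_bounds {n : ℕ} (w : Fin n → ℝ) (hw : ∀ i, 0 ≤ w i) (k : ℕ) (P : Finset (Fin n)) :
    (∑ i ∈ P, w i) ^ k ≤ PsiW w k P ∧
      PsiW w k P ≤ (Nat.factorial k : ℝ) * (∑ i ∈ P, w i) ^ k := by
  have hpow : (∑ i ∈ P, w i) ^ k
      = ∑ m ∈ P.sym k, ((m : Multiset (Fin n)).countPerms : ℝ)
          * ((m : Multiset (Fin n)).map w).prod := Finset.sum_pow w k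
  have hprodnn : ∀ m ∈ P.sym k, (0:ℝ) ≤ ((m : Multiset (Fin n)).map w).prod := by
    intro m _
    refine Multiset.prod_nonneg ?_
    intro x hx
    obtain ⟨i, _, rfl⟩ := Multiset.mem_map.1 hx
    exact hw i
  have hcard : ∀ m ∈ P.sym k, Multiset.card (m : Multiset (Fin n)) = k := fun m _ => m.2
  have hfac1 : (1:ℝ) ≤ (Nat.factorial k : ℝ) := by
    exact_mod_cast Nat.one_le_iff_ne_zero.mpr (Nat.factorial_ne_zero k)
  constructor
  · rw [hpow, PsiW, Finset.mul_sum]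
    refine Finset.sum_le_sum fun m hm => ?_
    refine mul_le_mul_of_nonneg_right ?_ (hprodnn m hm)
    exact_mod_cast (hcard m hm ▸ mult_le_factorial (m : Multiset (Fin n)))
  · rw [hpow, PsiW, Finset.mul_sum, Finset.mul_sum]
    refine Finset.sum_le_sum fun m hm => ?_
    rw [← mul_assoc]
    refine mul_le_mul_of_nonneg_right ?_ (hprodnn m hm)
    have h1 : (1:ℝ) ≤ ((m : Multiset (Fin n)).countPerms : ℝ) := by
      exact_mod_cast one_le_mult (m : Multiset (Fin n))
    nlinarith

theorem stmt10 {n : ℕ} {E : Type*} [Fintype E] [DecidableEq E] {d : ℕ}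
    (G : WCGame n E d) (S : Fin n → Finset E) (hS : G.IsState S) (u : Fin n) :
    G.cost S u ≤ G.pcost S u ∧
      G.pcost S u ≤ (Nat.factorial d : ℝ) * G.cost S u := by
  have hw : ∀ i, 0 ≤ G.w i := fun i => (G.w_pos i).le
  have hpownn : ∀ (P : Finset (Fin n)) (k : ℕ), (0:ℝ) ≤ (∑ i ∈ P, G.w i) ^ k := by
    intro P k
    exact pow_nonneg (Finset.sum_nonneg fun i _ => hw i) k
  constructor
  · rw [WCGame.cost, WCGame.pcost]
    refine mul_le_mul_of_nonneg_left ?_ (hw u)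
    refine Finset.sum_le_sum fun e _ => Finset.sum_le_sum fun k _ => ?_
    exact mul_le_mul_of_nonneg_left (psi_bounds G.w hw k _).1 (G.a_nonneg e k)
  · have key : G.pcost S u ≤ G.w u * ∑ e ∈ S u, ∑ k ∈ Finset.range (d + 1),
        G.a e k * ((Nat.factorial d : ℝ) * ((WCGame.users S e).sum G.w) ^ k) := by
      rw [WCGame.pcost]
      refine mul_le_mul_of_nonneg_left ?_ (hw u)
      refine Finset.sum_le_sum fun e _ => Finset.sum_le_sum fun k hk => ?_
      refine mul_le_mul_of_nonneg_left ?_ (G.a_nonneg e k)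
      refine le_trans (psi_bounds G.w hw k _).2 ?_
      refine mul_le_mul_of_nonneg_right ?_ (hpownn _ k)
      exact_mod_cast Nat.factorial_le (Nat.lt_succ_iff.mp (Finset.mem_range.mp hk))
    refine key.trans (le_of_eq ?_)
    rw [WCGame.cost, Finset.mul_sum, Finset.mul_sum, Finset.mul_sum]
    refine Finset.sum_congr rfl fun e _ => ?_
    rw [Finset.mul_sum, Finset.mul_sum, Finset.mul_sum]
    exact Finset.sum_congr rfl fun k _ => by ring
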